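/- arXiv:0903.3856 — 4 statements merged into one kernel-verified Lean document; each statement's English description precedes it below -/
import Mathlib

section
/- Let k be a field of characteristic ≠ 2, 3. If t, b ∈ k satisfy b² = 4t⁴ - 8t³ + 8t² + 4t + 1 and t ≠ 0, then the point (x, y) with x = (1 + b + 2t)/(2t²) and y = (1 + b + 3t + bt + 4t² - 2t³)/(2t³) satisfies y² = x(x + 3)(x - 1). -/
/-- If b² = 4t⁴ - 8t³ + 8t² + 4t + 1 and t ≠ 0 in a field of char ≠ 2,3, then
x = (1 + b + 2t)/(2t²), y = (1 + b + 3t + bt + 4t² - 2t³)/(2t³) satisfy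
y² = x(x + 3)(x - 1). -/
theorem stmt_5 (k : Type*) [Field k] (h2 : (2 : k) ≠ 0) (h3 : (3 : k) ≠ 0)
    (t b : k) (ht : t ≠ 0)
    (hb : b ^ 2 = 4 * t ^ 4 - 8 * t ^ 3 + 8 * t ^ 2 + 4 * t + 1) :
    ((1 + b + 3 * t + b * t + 4 * t ^ 2 - 2 * t ^ 3) / (2 * t ^ 3)) ^ 2 =
      ((1 + b + 2 * t) / (2 * t ^ 2)) * ((1 + b + 2 * t) / (2 * t ^ 2) + 3) *
        ((1 + b + 2 * t) / (2 * t ^ 2) - 1) := by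
  have hd : (2 * t ^ 2 * (2 * t ^ 2) * (2 * t ^ 2) : k) ≠ 0 := by
    simp [h2, ht]
  field_simp
  linear_combination (-(b + 1 + 2 * t + 2 * t ^ 2)) * hb
end

section
/- Let k be a field of characteristic ≠ 2, 3. If x, y ∈ k satisfy y² = x(x + 3)(x - 1) with x ≠ ±1, and t = (x + y - 1)/(x² - 1), b = (x³ + 5x² + 2xy - 2y - x + 3)/((x² - 1)(x + 1)), then the squares (2t² - 4t - 1)², b², (2t² + 1)², (2t² + 2t - 1)² form an arithmetic progression in k. -/
/-- If y² = x(x + 3)(x - 1) in a field of char ≠ 2,3 with x ≠ ±1, and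
t = (x + y - 1)/(x² - 1), b = (x³ + 5x² + 2xy - 2y - x + 3)/((x² - 1)(x + 1)),
then (2t² - 4t - 1)², b², (2t² + 1)², (2t² + 2t - 1)² form an arithmetic
progression in k. -/
theorem stmt_7 (k : Type*) [Field k] (h2 : (2 : k) ≠ 0) (h3 : (3 : k) ≠ 0)
    (x y : k) (hx1 : x ≠ 1) (hx2 : x ≠ -1)
    (hxy : y ^ 2 = x * (x + 3) * (x - 1))
    (t b : k) (ht : t = (x + y - 1) / (x ^ 2 - 1))
    (hb : b = (x ^ 3 + 5 * x ^ 2 + 2 * x * y - 2 * y - x + 3) /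
        ((x ^ 2 - 1) * (x + 1))) :
    (2 * t ^ 2 - 4 * t - 1) ^ 2 + (2 * t ^ 2 + 1) ^ 2 = 2 * b ^ 2 ∧
    b ^ 2 + (2 * t ^ 2 + 2 * t - 1) ^ 2 = 2 * (2 * t ^ 2 + 1) ^ 2 := by
  have hm : x - 1 ≠ 0 := sub_ne_zero.mpr hx1
  have hp : x + 1 ≠ 0 := fun h => hx2 (eq_neg_of_add_eq_zero_left h)
  have hd : x ^ 2 - 1 ≠ 0 := by
    have : x ^ 2 - 1 = (x - 1) * (x + 1) := by ring
    rw [this]; exact mul_ne_zero hm hp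
  -- cleared-denominator facts
  have hT : t * (x ^ 2 - 1) = x + y - 1 := by rw [ht]; field_simp
  have hB : b * ((x ^ 2 - 1) * (x + 1)) =
      x ^ 3 + 5 * x ^ 2 + 2 * x * y - 2 * y - x + 3 := by rw [hb]; field_simp
  have hM : ((x ^ 2 - 1) ^ 2) ^ 2 * (x + 1) ^ 2 ≠ 0 :=
    mul_ne_zero (pow_ne_zero _ (pow_ne_zero _ hd)) (pow_ne_zero _ hp)
  set d := x ^ 2 - 1 with hdef
  set T := x + y - 1 with hTdef
  set B := x ^ 3 + 5 * x ^ 2 + 2 * x * y - 2 * y - x + 3 with hBdef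
  constructor
  · refine mul_right_cancel₀ hM ?_
    have e1 : ((2 * T ^ 2 - 4 * T * d - d ^ 2) ^ 2 + (2 * T ^ 2 + d ^ 2) ^ 2) * (x + 1) ^ 2
        = 2 * B ^ 2 * d ^ 2 := by
      rw [hdef, hTdef, hBdef]
      linear_combination (8 - 16*y + 8*y^2 - 24*x + 16*x*y^2 - 40*x^2 + 32*x^2*y
        + 8*x^2*y^2 + 16*x^3 + 24*x^4 - 16*x^4*y + 8*x^5 + 8*x^6) * hxy
    calc ((2 * t ^ 2 - 4 * t - 1) ^ 2 + (2 * t ^ 2 + 1) ^ 2) * ((d ^ 2) ^ 2 * (x + 1) ^ 2)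
        = (((2 * (t * d) ^ 2 - 4 * (t * d) * d - d ^ 2) ^ 2
            + (2 * (t * d) ^ 2 + d ^ 2) ^ 2) * (x + 1) ^ 2) := by ring
      _ = ((2 * T ^ 2 - 4 * T * d - d ^ 2) ^ 2 + (2 * T ^ 2 + d ^ 2) ^ 2) * (x + 1) ^ 2 := by
            rw [hT]
      _ = 2 * B ^ 2 * d ^ 2 := e1
      _ = 2 * (b * (d * (x + 1))) ^ 2 * d ^ 2 := by rw [hB]
      _ = 2 * b ^ 2 * ((d ^ 2) ^ 2 * (x + 1) ^ 2) := by ring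
  · refine mul_right_cancel₀ hM ?_
    have e2 : B ^ 2 * d ^ 2 + (2 * T ^ 2 + 2 * T * d - d ^ 2) ^ 2 * (x + 1) ^ 2
        = 2 * (2 * T ^ 2 + d ^ 2) ^ 2 * (x + 1) ^ 2 := by
      rw [hdef, hTdef, hBdef]
      linear_combination (-4 + 8*y - 4*y^2 + 12*x - 8*x*y^2 - 16*x^2*y - 4*x^2*y^2
        + 20*x^2 - 8*x^3 - 12*x^4 + 8*x^4*y - 4*x^5 - 4*x^6) * hxy
    calc (b ^ 2 + (2 * t ^ 2 + 2 * t - 1) ^ 2) * ((d ^ 2) ^ 2 * (x + 1) ^ 2)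
        = (b * (d * (x + 1))) ^ 2 * d ^ 2
          + (2 * (t * d) ^ 2 + 2 * (t * d) * d - d ^ 2) ^ 2 * (x + 1) ^ 2 := by ring
      _ = B ^ 2 * d ^ 2 + (2 * T ^ 2 + 2 * T * d - d ^ 2) ^ 2 * (x + 1) ^ 2 := by
            rw [hT, hB]
      _ = 2 * (2 * T ^ 2 + d ^ 2) ^ 2 * (x + 1) ^ 2 := e2
      _ = 2 * (2 * (t * d) ^ 2 + d ^ 2) ^ 2 * (x + 1) ^ 2 := by rw [hT]
      _ = 2 * (2 * t ^ 2 + 1) ^ 2 * ((d ^ 2) ^ 2 * (x + 1) ^ 2) := by ring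
end

section
/- There is no non-constant arithmetic progression of four squares of integers; that is, if a, b, c, d ∈ ℤ with a² + c² = 2b² and b² + d² = 2c², then a² = b² = c² = d². -/
-- assume p1 contents present; for testing, re-include via copy

private lemma not_unit_prime {p : ℕ} (hp : p.Prime) : ¬ IsUnit ((p : ℤ)) := by
  intro h
  rcases Int.isUnit_iff.mp h with h1 | h1
  · have : p = 1 := by exact_mod_cast h1
    exact absurd this hp.one_lt.ne'
  · have h0 : (0:ℤ) ≤ (p:ℤ) := Int.natCast_nonneg p
    omega

private lemma sq_pos_of_ne_zero' {a : ℤ} (h : a ≠ 0) : 0 < a ^ 2 :=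
  lt_of_le_of_ne (sq_nonneg a) (Ne.symm (pow_ne_zero 2 h))

private lemma four_num {a b c d : ℤ} (ha : a ≠ 0) (h : a * b = c * d) :
    ∃ A B C D : ℤ, a = A * B ∧ b = C * D ∧ c = A * C ∧ d = B * D ∧ IsCoprime B C ∧
      (IsCoprime a b → IsCoprime A D) := by
  have hg : 0 < Int.gcd a c := Int.gcd_pos_iff.mpr (Or.inl ha)
  set A : ℤ := (Int.gcd a c : ℤ) with hAdef
  have hA0 : A ≠ 0 := by
    simp only [hAdef]
    exact_mod_cast hg.ne'
  obtain ⟨B, hB⟩ : A ∣ a := Int.gcd_dvd_left _ _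
  obtain ⟨C, hC⟩ : A ∣ c := Int.gcd_dvd_right _ _
  have hBC : IsCoprime B C := by
    have h1 := Int.gcd_div_gcd_div_gcd hg
    have e1 : a / A = B := by rw [hB]; exact Int.mul_ediv_cancel_left _ hA0
    have e2 : c / A = C := by rw [hC]; exact Int.mul_ediv_cancel_left _ hA0
    rw [Int.isCoprime_iff_gcd_eq_one, ← e1, ← e2]
    exact h1
  have hBb : B * b = C * d := by
    apply mul_left_cancel₀ hA0
    linear_combination h - b * hB + d * hC
  have hB0 : B ≠ 0 := by
    rintro rfl
    exact ha (by simpa using hB)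
  have hBd : B ∣ d := by
    have : B ∣ C * d := ⟨b, hBb.symm⟩
    exact hBC.dvd_of_dvd_mul_left this
  obtain ⟨D, hD⟩ := hBd
  have hb : b = C * D := by
    apply mul_left_cancel₀ hB0
    linear_combination hBb + C * hD
  refine ⟨A, B, C, D, hB, hb, hC, hD, hBC, fun hab => ?_⟩
  have hAa : A ∣ a := ⟨B, hB⟩
  have hDb : D ∣ b := ⟨C, by rw [hb]; ring⟩
  exact (hab.of_isCoprime_of_dvd_left hAa).of_isCoprime_of_dvd_right hDb

private lemma sigma_key {r s u v : ℤ} (hco : IsCoprime r s) (huv : IsCoprime u v)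
    (heq : r ^ 2 - s ^ 2 = u ^ 2 - v ^ 2) (hprod : r * s = 2 * (u * v))
    (hEu : Even u) (hOv : Odd v) (hors : Odd (r + s))
    (hr0 : r ≠ 0) (hs0 : s ≠ 0) (hu0 : u ≠ 0) (hv0 : v ≠ 0) :
    ∃ P S Q R : ℤ, P ^ 2 + S ^ 2 = Q ^ 2 ∧ 4 * P ^ 2 + S ^ 2 = R ^ 2 ∧
      P ≠ 0 ∧ S ≠ 0 ∧ u * v = P * Q * R * S := by
  rcases Int.even_or_odd r with hEr | hOr
  · -- r even, s odd
    have hOs : Odd s := by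
      rcases Int.even_or_odd s with hEs | hOs
      · exfalso
        have : Even (r + s) := hEr.add hEs
        rw [← Int.not_odd_iff_even] at this
        exact this hors
      · exact hOs
    obtain ⟨ρ, hρ2⟩ := hEr
    have hr2 : r = 2 * ρ := by linarith
    have hρ0 : ρ ≠ 0 := by rintro rfl; exact hr0 (by omega)
    have hρs : ρ * s = u * v := by
      apply mul_left_cancel₀ (two_ne_zero (α := ℤ))
      linear_combination hprod - s * hr2
    have hcops : IsCoprime ρ s := hco.of_isCoprime_of_dvd_left ⟨2, by omega⟩
    obtain ⟨A, B, C, D, hρA, hsA, huA, hvA, hBC, hADf⟩ := four_num hρ0 hρs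
    have hAD : IsCoprime A D := hADf hcops
    rw [hsA, Int.odd_mul] at hOs
    obtain ⟨hOC, hOD⟩ := hOs
    have hOv' := hOv
    rw [hvA, Int.odd_mul] at hOv'
    obtain ⟨hOB, hOD'⟩ := hOv'
    have hEA : Even A := by
      have := hEu
      rw [huA, Int.even_mul] at this
      rcases this with hA | hC
      · exact hA
      · exact absurd hOC (Int.not_odd_iff_even.mpr hC)
    have hr4 : r = 2 * (A * B) := by rw [hr2, hρA]
    rw [hr4, hsA, huA, hvA] at heq
    have hMain : B ^ 2 * (4 * A ^ 2 + D ^ 2) = C ^ 2 * (A ^ 2 + D ^ 2) := by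
      linear_combination heq
    have hB0 : B ≠ 0 := by rintro rfl; exact hv0 (by simp [hvA])
    have hC0 : C ≠ 0 := by rintro rfl; exact hs0 (by simp [hsA])
    have hA0 : A ≠ 0 := by rintro rfl; exact hu0 (by simp [huA])
    have hD0 : D ≠ 0 := by rintro rfl; exact hv0 (by simp [hvA])
    have hB2 : B ^ 2 ∣ A ^ 2 + D ^ 2 := by
      have hd1 : B ^ 2 ∣ C ^ 2 * (A ^ 2 + D ^ 2) := ⟨4 * A ^ 2 + D ^ 2, hMain.symm⟩
      exact (hBC.pow).dvd_of_dvd_mul_left hd1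
    obtain ⟨k, hk⟩ := hB2
    have h4k : 4 * A ^ 2 + D ^ 2 = k * C ^ 2 := by
      apply mul_left_cancel₀ (pow_ne_zero 2 hB0)
      linear_combination hMain + C ^ 2 * hk
    have hADpos : 0 < A ^ 2 + D ^ 2 := by
      have := sq_pos_of_ne_zero' hA0
      have := sq_nonneg D
      linarith
    have hkpos : 0 < k := by
      by_contra hle
      push_neg at hle
      have : B ^ 2 * k ≤ 0 := mul_nonpos_of_nonneg_of_nonpos (sq_nonneg B) hle
      linarith
    have hkP : k ∣ 3 * A ^ 2 := ⟨C ^ 2 - B ^ 2, by linear_combination h4k - hk⟩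
    have hkS : k ∣ 3 * D ^ 2 := ⟨4 * B ^ 2 - C ^ 2, by linear_combination 4 * hk - h4k⟩
    obtain ⟨α, β, hαβ⟩ := (hAD.pow (m := 2) (n := 2))
    have h3 : k ∣ 3 := by
      have h33 : (3 : ℤ) = α * (3 * A ^ 2) + β * (3 * D ^ 2) := by linear_combination -3 * hαβ
      rw [h33]
      exact dvd_add (hkP.mul_left α) (hkS.mul_left β)
    have hk13 : k = 1 ∨ k = 3 := by
      have hle := Int.le_of_dvd (by norm_num) h3
      interval_cases k
      · left; rfl
      · exfalso; norm_num at h3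
      · right; rfl
    rcases hk13 with rfl | rfl
    · exact ⟨A, D, B, C, by linear_combination hk, by linear_combination h4k, hA0, hD0,
        by rw [huA, hvA]; ring⟩
    · exfalso
      have hz : ((A : ZMod 3) ^ 2 + (D : ZMod 3) ^ 2 = 0) := by
        have hcast := congrArg (fun z : ℤ => (z : ZMod 3)) hk
        push_cast at hcast
        rw [hcast]
        have h30 : ((3 : ℤ) : ZMod 3) = 0 := by decide
        push_cast at h30
        rw [h30]
        ring
      have hdec : ∀ x y : ZMod 3, x ^ 2 + y ^ 2 = 0 → x = 0 ∧ y = 0 := by decide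
      obtain ⟨h3A', h3D'⟩ := hdec _ _ hz
      have h3A : (3 : ℤ) ∣ A := (ZMod.intCast_zmod_eq_zero_iff_dvd A 3).mp h3A'
      have h3D : (3 : ℤ) ∣ D := (ZMod.intCast_zmod_eq_zero_iff_dvd D 3).mp h3D'
      exact absurd (hAD.isUnit_of_dvd' h3A h3D) (by norm_num [Int.isUnit_iff])
  · -- r odd, s even
    exfalso
    have hEs : Even s := by
      rcases Int.even_or_odd s with hEs | hOs
      · exact hEs
      · exfalso
        have : Even (r + s) := hOr.add_odd hOs
        rw [← Int.not_odd_iff_even] at this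
        exact this hors
    obtain ⟨σ, hσ2⟩ := hEs
    have hs2 : s = 2 * σ := by linarith
    have hrσ : r * σ = u * v := by
      apply mul_left_cancel₀ (two_ne_zero (α := ℤ))
      linear_combination hprod - r * hs2
    obtain ⟨A, B, C, D, hrA, hσA, huA, hvA, hBC, hADf⟩ := four_num hr0 hrσ
    have hOr' := hOr
    rw [hrA, Int.odd_mul] at hOr'
    obtain ⟨hOA, hOB⟩ := hOr'
    have hOv' := hOv
    rw [hvA, Int.odd_mul] at hOv'
    obtain ⟨hOB', hOD⟩ := hOv'
    have hEC : Even C := by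
      have := hEu
      rw [huA, Int.even_mul] at this
      rcases this with hA | hC
      · exact absurd hOA (Int.not_odd_iff_even.mpr hA)
      · exact hC
    have hs4 : s = 2 * (C * D) := by rw [hs2, hσA]
    rw [hrA, hs4, huA, hvA] at heq
    have hMod : B ^ 2 * (A ^ 2 + D ^ 2) = C ^ 2 * (A ^ 2 + 4 * D ^ 2) := by
      linear_combination heq
    obtain ⟨a, ha⟩ := hOA
    obtain ⟨b', hb'⟩ := hOB
    obtain ⟨d', hd'⟩ := hOD
    obtain ⟨e, he⟩ := hEC
    rw [ha, hb', hd'] at hMod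
    rw [he] at hMod
    obtain ⟨L, hL⟩ : ∃ L : ℤ, (2 * b' + 1) ^ 2 * ((2 * a + 1) ^ 2 + (2 * d' + 1) ^ 2)
        = 4 * L + 2 :=
      ⟨4 * (b' ^ 2 + b') * (a ^ 2 + a + d' ^ 2 + d') + 2 * (b' ^ 2 + b')
        + (a ^ 2 + a + d' ^ 2 + d'), by ring⟩
    obtain ⟨Rr, hRr⟩ : ∃ Rr : ℤ, (e + e) ^ 2 * ((2 * a + 1) ^ 2 + 4 * (2 * d' + 1) ^ 2)
        = 4 * Rr := ⟨e ^ 2 * ((2 * a + 1) ^ 2 + 4 * (2 * d' + 1) ^ 2), by ring⟩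
    rw [hL, hRr] at hMod
    omega

private lemma conc14_all : ∀ (N : ℕ) (A D B C : ℤ), A.natAbs + D.natAbs ≤ N →
    A ^ 2 + D ^ 2 = B ^ 2 → 4 * A ^ 2 + D ^ 2 = C ^ 2 → A = 0 ∨ D = 0 := by
  intro N
  induction N using Nat.strong_induction_on with
  | _ N IH =>
    intro A D B C hN h1 h2
    by_contra hcon
    push_neg at hcon
    obtain ⟨hA0, hD0⟩ := hcon
    by_cases hg1 : Int.gcd A D = 1
    case neg =>
      have hgpos : 0 < Int.gcd A D := Int.gcd_pos_iff.mpr (Or.inl hA0)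
      have hg2 : 2 ≤ Int.gcd A D := by omega
      set g : ℤ := (Int.gcd A D : ℤ) with hgdef
      obtain ⟨A₁, hA₁⟩ : g ∣ A := Int.gcd_dvd_left _ _
      obtain ⟨D₁, hD₁⟩ : g ∣ D := Int.gcd_dvd_right _ _
      have hgB : g ∣ B := by
        have : g ^ 2 ∣ B ^ 2 :=
          ⟨A₁ ^ 2 + D₁ ^ 2, by linear_combination -h1 + (A + g*A₁)*hA₁ + (D + g*D₁)*hD₁⟩
        exact (Int.pow_dvd_pow_iff two_ne_zero).mp this
      have hgC : g ∣ C := by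
        have : g ^ 2 ∣ C ^ 2 :=
          ⟨4 * A₁ ^ 2 + D₁ ^ 2, by linear_combination -h2 + (4*A + 4*g*A₁)*hA₁ + (D + g*D₁)*hD₁⟩
        exact (Int.pow_dvd_pow_iff two_ne_zero).mp this
      obtain ⟨B₁, hB₁⟩ := hgB
      obtain ⟨C₁, hC₁⟩ := hgC
      have hgne : g ≠ 0 := by
        simp only [hgdef]
        exact_mod_cast hgpos.ne'
      have e1 : A₁ ^ 2 + D₁ ^ 2 = B₁ ^ 2 := by
        apply mul_left_cancel₀ (pow_ne_zero 2 hgne)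
        linear_combination h1 - (A + g*A₁)*hA₁ - (D + g*D₁)*hD₁ + (B + g*B₁)*hB₁
      have e2 : 4 * A₁ ^ 2 + D₁ ^ 2 = C₁ ^ 2 := by
        apply mul_left_cancel₀ (pow_ne_zero 2 hgne)
        linear_combination h2 - (4*A + 4*g*A₁)*hA₁ - (D + g*D₁)*hD₁ + (C + g*C₁)*hC₁
      have hA₁0 : A₁ ≠ 0 := by rintro rfl; exact hA0 (by simpa using hA₁)
      have hD₁0 : D₁ ≠ 0 := by rintro rfl; exact hD0 (by simpa using hD₁)
      have hlt : A₁.natAbs + D₁.natAbs < N := by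
        have hAab : A.natAbs = (Int.gcd A D) * A₁.natAbs := by
          conv_lhs => rw [hA₁]
          rw [Int.natAbs_mul, hgdef]; simp
        have hDab : D.natAbs = (Int.gcd A D) * D₁.natAbs := by
          conv_lhs => rw [hD₁]
          rw [Int.natAbs_mul, hgdef]; simp
        have h1' : 1 ≤ A₁.natAbs := Nat.one_le_iff_ne_zero.mpr (Int.natAbs_ne_zero.mpr hA₁0)
        have h2' : 1 ≤ D₁.natAbs := Nat.one_le_iff_ne_zero.mpr (Int.natAbs_ne_zero.mpr hD₁0)
        have hAlt : A₁.natAbs < A.natAbs := by rw [hAab]; nlinarith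
        have hDlt : D₁.natAbs < D.natAbs := by rw [hDab]; nlinarith
        omega
      rcases IH _ hlt A₁ D₁ B₁ C₁ le_rfl e1 e2 with h | h
      · exact hA₁0 h
      · exact hD₁0 h
    case pos =>
    have hAD : IsCoprime A D := Int.isCoprime_iff_gcd_eq_one.mpr hg1
    rcases Int.even_or_odd A with hEA | hOA
    case inr =>
      rcases Int.even_or_odd D with hED | hOD
      case inr =>
        obtain ⟨a, ha⟩ := hOA
        obtain ⟨d, hd⟩ := hOD
        rcases Int.even_or_odd B with hEB | hOB
        · obtain ⟨b, hb⟩ := hEB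
          rw [ha, hd, hb] at h1
          obtain ⟨X, hX⟩ : ∃ X : ℤ, (2*a+1)^2 + (2*d+1)^2 = 4*X + 2 :=
            ⟨a^2+a+d^2+d, by ring⟩
          obtain ⟨Y, hY⟩ : ∃ Y : ℤ, (b+b)^2 = 4*Y := ⟨b^2, by ring⟩
          rw [hX, hY] at h1; omega
        · obtain ⟨b, hb⟩ := hOB
          rw [ha, hd, hb] at h1
          obtain ⟨X, hX⟩ : ∃ X : ℤ, (2*a+1)^2 + (2*d+1)^2 = 4*X + 2 :=
            ⟨a^2+a+d^2+d, by ring⟩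
          obtain ⟨Y, hY⟩ : ∃ Y : ℤ, (2*b+1)^2 = 4*Y + 1 := ⟨b^2+b, by ring⟩
          rw [hX, hY] at h1; omega
      case inl =>
        -- A odd, D even : swap step
        obtain ⟨δ, hδ⟩ := hED
        have hδ2 : D = 2 * δ := by linarith
        have hδ0 : δ ≠ 0 := by rintro rfl; exact hD0 (by omega)
        have hEC : Even C := by
          rcases Int.even_or_odd C with h | h
          · exact h
          · exfalso
            obtain ⟨c, hc⟩ := h
            obtain ⟨a, ha⟩ := hOA
            rw [hδ2, hc, ha] at h2
            obtain ⟨X, hX⟩ : ∃ X : ℤ, 4*(2*a+1)^2 + (2*δ)^2 = 4*X :=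
              ⟨(2*a+1)^2 + δ^2, by ring⟩
            obtain ⟨Y, hY⟩ : ∃ Y : ℤ, (2*c+1)^2 = 4*Y+1 := ⟨c^2+c, by ring⟩
            rw [hX, hY] at h2; omega
        obtain ⟨γ, hγ⟩ := hEC
        have hγ2 : C = 2 * γ := by linarith
        have e1 : δ ^ 2 + A ^ 2 = γ ^ 2 := by
          apply mul_left_cancel₀ (show (4:ℤ) ≠ 0 by norm_num)
          linear_combination h2 - (D + 2*δ)*hδ2 + (C + 2*γ)*hγ2
        have e2 : 4 * δ ^ 2 + A ^ 2 = B ^ 2 := by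
          linear_combination h1 - (D + 2*δ)*hδ2
        have hlt : δ.natAbs + A.natAbs < N := by
          have hDab : D.natAbs = 2 * δ.natAbs := by
            rw [hδ2, Int.natAbs_mul]; rfl
          have : 1 ≤ δ.natAbs := Nat.one_le_iff_ne_zero.mpr (Int.natAbs_ne_zero.mpr hδ0)
          omega
        rcases IH _ hlt δ A γ B le_rfl e1 e2 with h | h
        · exact hδ0 h
        · exact hA0 h
    case inl =>
      -- A even : main descent
      have hOD : Odd D := by
        rcases Int.even_or_odd D with hED | hOD
        · exfalso
          obtain ⟨x, hx⟩ := hEA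
          obtain ⟨y, hy⟩ := hED
          have d1 : (2:ℤ) ∣ A := ⟨x, by omega⟩
          have d2 : (2:ℤ) ∣ D := ⟨y, by omega⟩
          exact absurd (hAD.isUnit_of_dvd' d1 d2) (by norm_num [Int.isUnit_iff])
        · exact hOD
      have ht1 : PythagoreanTriple A D B := by
        show A*A + D*D = B*B
        linear_combination h1
      obtain ⟨m, n, hmn, hB, hco, hpar⟩ :=
        PythagoreanTriple.coprime_classification.mp ⟨ht1, hg1⟩
      rcases hmn with ⟨hA', hD'⟩ | ⟨hA', hD'⟩
      · exact absurd hOD (Int.not_odd_iff_even.mpr ⟨m*n, by rw [hD']; ring⟩)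
      obtain ⟨dd, hdd⟩ := id hOD
      have h2co : IsCoprime (2:ℤ) D := ⟨-dd, 1, by rw [hdd]; ring⟩
      have ht2 : PythagoreanTriple (2*A) D C := by
        show (2*A)*(2*A) + D*D = C*C
        linear_combination h2
      have hgcd2 : Int.gcd (2*A) D = 1 :=
        Int.isCoprime_iff_gcd_eq_one.mp (IsCoprime.mul_left h2co hAD)
      obtain ⟨m', n', hmn', hC, hco', hpar'⟩ :=
        PythagoreanTriple.coprime_classification.mp ⟨ht2, hgcd2⟩
      rcases hmn' with ⟨hA2', hD2'⟩ | ⟨hA2', hD2'⟩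
      · exact absurd hOD (Int.not_odd_iff_even.mpr ⟨m'*n', by rw [hD2']; ring⟩)
      have hA2 : A = m' * n' := by linarith
      have hm0 : m ≠ 0 := by rintro rfl; exact hA0 (by simpa using hA')
      have hn0 : n ≠ 0 := by rintro rfl; exact hA0 (by simpa using hA')
      have hm'0 : m' ≠ 0 := by rintro rfl; exact hA0 (by simpa using hA2)
      have hn'0 : n' ≠ 0 := by rintro rfl; exact hA0 (by simpa using hA2)
      have hcomn : IsCoprime m n := Int.isCoprime_iff_gcd_eq_one.mpr hco
      have hcomn' : IsCoprime m' n' := Int.isCoprime_iff_gcd_eq_one.mpr hco'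
      have hors' : Odd (m' + n') := by
        rcases hpar' with ⟨he, ho⟩ | ⟨ho, he⟩
        · exact (Int.even_iff.mpr he).add_odd (Int.odd_iff.mpr ho)
        · exact (Int.odd_iff.mpr ho).add_even (Int.even_iff.mpr he)
      have hkey : ∃ P S Q R : ℤ, P ^ 2 + S ^ 2 = Q ^ 2 ∧ 4 * P ^ 2 + S ^ 2 = R ^ 2 ∧
          P ≠ 0 ∧ S ≠ 0 ∧ A = 2 * (P * Q * R * S) := by
        rcases hpar with ⟨hm2, hn2⟩ | ⟨hm2, hn2⟩
        · -- m even, n odd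
          obtain ⟨P, S, Q, R, f1, f2, fP, fS, fprod⟩ :=
            sigma_key hcomn' hcomn
              (show m'^2 - n'^2 = m^2 - n^2 by linarith)
              (show m' * n' = 2 * (m * n) by linarith)
              (Int.even_iff.mpr hm2) (Int.odd_iff.mpr hn2) hors'
              hm'0 hn'0 hm0 hn0
          exact ⟨P, S, Q, R, f1, f2, fP, fS, by rw [hA']; linear_combination 2*fprod⟩
        · -- n even, m odd
          have hors2 : Odd (n' + m') := by rwa [add_comm]
          obtain ⟨P, S, Q, R, f1, f2, fP, fS, fprod⟩ :=
            sigma_key hcomn'.symm hcomn.symm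
              (show n'^2 - m'^2 = n^2 - m^2 by linarith)
              (show n' * m' = 2 * (n * m) by linear_combination hA' - hA2)
              (Int.even_iff.mpr hn2) (Int.odd_iff.mpr hm2) hors2
              hn'0 hm'0 hn0 hm0
          exact ⟨P, S, Q, R, f1, f2, fP, fS, by rw [hA']; linear_combination 2*fprod⟩
      obtain ⟨P, S, Q, R, f1, f2, fP0, fS0, fA⟩ := hkey
      have hQ0 : Q ≠ 0 := by
        rintro rfl
        exact hA0 (by rw [fA]; ring)
      have hR0 : R ≠ 0 := by
        rintro rfl
        exact hA0 (by rw [fA]; ring)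
      have hlt : P.natAbs + S.natAbs < N := by
        have habs : A.natAbs = 2 * (P * Q * R * S).natAbs := by
          rw [fA, Int.natAbs_mul]
          norm_num
        have hsplit : (P * Q * R * S).natAbs
            = P.natAbs * Q.natAbs * R.natAbs * S.natAbs := by
          rw [Int.natAbs_mul, Int.natAbs_mul, Int.natAbs_mul]
        have hp1 : 1 ≤ P.natAbs := Nat.one_le_iff_ne_zero.mpr (Int.natAbs_ne_zero.mpr fP0)
        have hq1 : 1 ≤ Q.natAbs := Nat.one_le_iff_ne_zero.mpr (Int.natAbs_ne_zero.mpr hQ0)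
        have hr1 : 1 ≤ R.natAbs := Nat.one_le_iff_ne_zero.mpr (Int.natAbs_ne_zero.mpr hR0)
        have hs1 : 1 ≤ S.natAbs := Nat.one_le_iff_ne_zero.mpr (Int.natAbs_ne_zero.mpr fS0)
        have hD1 : 1 ≤ D.natAbs := Nat.one_le_iff_ne_zero.mpr (Int.natAbs_ne_zero.mpr hD0)
        obtain ⟨t, e1, e2, e3⟩ : ∃ t : ℕ, P.natAbs ≤ t ∧ S.natAbs ≤ t ∧ A.natAbs = 2*t := by
          refine ⟨P.natAbs * Q.natAbs * R.natAbs * S.natAbs, ?_, ?_, by rw [habs, hsplit]⟩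
          · calc P.natAbs = P.natAbs*1*1*1 := by ring
              _ ≤ P.natAbs * Q.natAbs * R.natAbs * S.natAbs := by gcongr <;> omega
          · calc S.natAbs = 1*1*1*S.natAbs := by ring
              _ ≤ P.natAbs * Q.natAbs * R.natAbs * S.natAbs := by gcongr <;> omega
        omega
      rcases IH _ hlt P S Q R le_rfl f1 f2 with h | h
      · exact fP0 h
      · exact fS0 h

private theorem conc14 (A D B C : ℤ) (h1 : A ^ 2 + D ^ 2 = B ^ 2)
    (h2 : 4 * A ^ 2 + D ^ 2 = C ^ 2) : A = 0 ∨ D = 0 :=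
  conc14_all (A.natAbs + D.natAbs) A D B C le_rfl h1 h2

private lemma T2aux {u v w : ℤ} (huv : IsCoprime u v) (hEu : Even u) (hOv : Odd v)
    (hu0 : u ≠ 0) (hv0 : v ≠ 0)
    (hw : u ^ 4 + 14 * u ^ 2 * v ^ 2 + v ^ 4 = w ^ 2) : False := by
  set w₀ : ℤ := |w| with hw₀def
  have hww : w₀ ^ 2 = u ^ 4 + 14 * u ^ 2 * v ^ 2 + v ^ 4 := by
    rw [hw₀def, sq_abs]; linarith
  have hv1 : 1 ≤ v ^ 2 := by have := sq_pos_of_ne_zero' hv0; linarith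
  have hu1 : 1 ≤ u ^ 2 := by have := sq_pos_of_ne_zero' hu0; linarith
  have hwpos : 0 < w₀ := by
    have h0 : 0 < w₀ ^ 2 := by nlinarith [sq_nonneg (u^2), sq_nonneg (v^2), sq_nonneg (u*v)]
    rcases (abs_nonneg w).lt_or_eq with h | h
    · exact h
    · exfalso; rw [hw₀def, ← h] at h0; simp at h0
  have hOw : Odd w₀ := by
    obtain ⟨x, hx⟩ := hEu
    obtain ⟨y, hy⟩ := hOv
    have ho2 : Odd (w₀ ^ 2) := by
      rw [hww, hx, hy]
      exact ⟨8*x^4 + 28*x^2*(2*y+1)^2 + 8*y^4+16*y^3+12*y^2+4*y, by ring⟩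
    rcases Int.odd_pow.mp ho2 with h | h
    · exact h
    · norm_num at h
  obtain ⟨W₁, hW₁⟩ : ∃ W₁ : ℤ, w₀ + u ^ 2 - v ^ 2 = 2 * W₁ := by
    obtain ⟨x, hx⟩ := hEu
    obtain ⟨y, hy⟩ := hOv
    obtain ⟨z, hz⟩ := hOw
    exact ⟨z + 2*x^2 - 2*y^2 - 2*y, by rw [hx, hy, hz]; ring⟩
  set W₂ : ℤ := w₀ - W₁ with hW₂def
  have hsum : W₁ + W₂ = w₀ := by rw [hW₂def]; ring
  have hdiff : W₁ - W₂ = u ^ 2 - v ^ 2 := by rw [hW₂def]; linarith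
  have hprod : W₁ * W₂ = (2 * u * v) ^ 2 := by
    apply mul_left_cancel₀ (show (4:ℤ) ≠ 0 by norm_num)
    have h2W₂ : 2 * W₂ = w₀ - u ^ 2 + v ^ 2 := by rw [hW₂def]; linarith
    have expand : 4 * (W₁ * W₂) = (2*W₁) * (2*W₂) := by ring
    rw [expand, ← hW₁, h2W₂]
    linear_combination hww
  have hcopW : IsCoprime W₁ W₂ := by
    rw [Int.isCoprime_iff_gcd_eq_one]
    by_contra hne
    obtain ⟨p, hp, hpd⟩ := Nat.exists_prime_and_dvd hne
    have hp1 : (p:ℤ) ∣ W₁ := (Int.natCast_dvd_natCast.mpr hpd).trans (Int.gcd_dvd_left _ _)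
    have hp2 : (p:ℤ) ∣ W₂ := (Int.natCast_dvd_natCast.mpr hpd).trans (Int.gcd_dvd_right _ _)
    have hpw : (p:ℤ) ∣ w₀ := hsum ▸ dvd_add hp1 hp2
    have hpP : Prime (p:ℤ) := Nat.prime_iff_prime_int.mp hp
    have hpne2 : p ≠ 2 := by
      rintro rfl
      obtain ⟨z, hz⟩ := hOw
      obtain ⟨t, ht⟩ := hpw
      omega
    have hpuv : False := by
      have hdp : (p:ℤ) ∣ (2*u*v)^2 := hprod ▸ (hp1.mul_right W₂)
      have h2uv : (p:ℤ) ∣ 2*u*v := hpP.dvd_of_dvd_pow hdp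
      have hdiffd : (p:ℤ) ∣ u^2 - v^2 := hdiff ▸ dvd_sub hp1 hp2
      rcases hpP.dvd_mul.mp h2uv with h2u | hv
      · rcases hpP.dvd_mul.mp h2u with h2 | hu
        · have hp2' : p ∣ 2 := by exact_mod_cast h2
          exact hpne2 ((Nat.prime_dvd_prime_iff_eq hp Nat.prime_two).mp hp2')
        · have hu2 : (p:ℤ) ∣ u^2 := by
            obtain ⟨t, ht⟩ := hu
            exact ⟨u*t, by rw [ht]; ring⟩
          have hv2 : (p:ℤ) ∣ v^2 := by
            obtain ⟨t1, ht1⟩ := hu2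
            obtain ⟨t2, ht2⟩ := hdiffd
            exact ⟨t1 - t2, by linear_combination ht1 - ht2⟩
          have hv' : (p:ℤ) ∣ v := hpP.dvd_of_dvd_pow hv2
          exact not_unit_prime hp (huv.isUnit_of_dvd' hu hv')
      · have hu2 : (p:ℤ) ∣ u^2 := by
          have hv2 : (p:ℤ) ∣ v^2 := by
            obtain ⟨t, ht⟩ := hv
            exact ⟨v*t, by rw [ht]; ring⟩
          obtain ⟨t1, ht1⟩ := hv2
          obtain ⟨t2, ht2⟩ := hdiffd
          exact ⟨t1 + t2, by linear_combination ht1 + ht2⟩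
        have hu' : (p:ℤ) ∣ u := hpP.dvd_of_dvd_pow hu2
        exact not_unit_prime hp (huv.isUnit_of_dvd' hu' hv)
    exact hpuv
  obtain ⟨r, hr⟩ := Int.sq_of_isCoprime hcopW hprod
  obtain ⟨s, hs⟩ := Int.sq_of_isCoprime hcopW.symm (by rw [mul_comm]; exact hprod)
  have hprodpos : 0 < W₁ * W₂ := by
    rw [hprod]
    apply sq_pos_of_ne_zero'
    intro h
    rcases mul_eq_zero.mp h with h' | h'
    · rcases mul_eq_zero.mp h' with h'' | h''
      · norm_num at h''
      · exact hu0 h''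
    · exact hv0 h'
  have hW₁ne : W₁ ≠ 0 := by rintro h; rw [h] at hprodpos; simp at hprodpos
  have hW₁pos : 0 < W₁ := by
    by_contra hle
    push_neg at hle
    have hlt : W₁ < 0 := hle.lt_of_ne hW₁ne
    have hW₂neg : W₂ < 0 := by
      by_contra hh
      push_neg at hh
      nlinarith
    linarith
  have hW₂pos : 0 < W₂ := by nlinarith
  have hr' : W₁ = r ^ 2 := by
    rcases hr with h | h
    · exact h
    · exfalso; nlinarith [sq_nonneg r]
  have hs' : W₂ = s ^ 2 := by
    rcases hs with h | h
    · exact h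
    · exfalso; nlinarith [sq_nonneg s]
  have hr0 : r ≠ 0 := by rintro rfl; rw [hr'] at hW₁pos; simp at hW₁pos
  have hs0 : s ≠ 0 := by rintro rfl; rw [hs'] at hW₂pos; simp at hW₂pos
  rw [hr', hs'] at hdiff hprod hsum hcopW
  have hcoprs : IsCoprime r s :=
    (hcopW.of_isCoprime_of_dvd_left (dvd_pow_self r two_ne_zero)).of_isCoprime_of_dvd_right
      (dvd_pow_self s two_ne_zero)
  have hors : Odd (r + s) := by
    rcases Int.even_or_odd r with hEr | hOr <;> rcases Int.even_or_odd s with hEs | hOs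
    · exfalso
      have : Even w₀ := by
        rw [← hsum]
        exact (Int.even_pow.mpr ⟨hEr, two_ne_zero⟩).add (Int.even_pow.mpr ⟨hEs, two_ne_zero⟩)
      exact (Int.not_odd_iff_even.mpr this) hOw
    · exact hEr.add_odd hOs
    · exact hOr.add_even hEs
    · exfalso
      have : Even w₀ := by
        rw [← hsum]
        exact (hOr.pow).add_odd (hOs.pow)
      exact (Int.not_odd_iff_even.mpr this) hOw
  have hfac : (r*s - 2*u*v) * (r*s + 2*u*v) = 0 := by linear_combination hprod
  rcases mul_eq_zero.mp hfac with hcase | hcase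
  · obtain ⟨P, S, Q, R, f1, f2, fP, fS, _⟩ :=
      sigma_key hcoprs huv hdiff (by linear_combination hcase) hEu hOv hors hr0 hs0 hu0 hv0
    rcases conc14 P S Q R f1 f2 with h | h
    · exact fP h
    · exact fS h
  · obtain ⟨P, S, Q, R, f1, f2, fP, fS, _⟩ :=
      sigma_key hcoprs (huv.neg_right)
        (show r^2 - s^2 = u^2 - (-v)^2 by linear_combination hdiff)
        (show r*s = 2*(u*(-v)) by linear_combination hcase)
        hEu (hOv.neg) hors hr0 hs0 hu0 (neg_ne_zero.mpr hv0)
    rcases conc14 P S Q R f1 f2 with h | h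
    · exact fP h
    · exact fS h

private lemma T2 {u v w : ℤ} (huv : IsCoprime u v) (hpar : Odd (u + v)) (hu0 : u ≠ 0)
    (hv0 : v ≠ 0) (hw : u ^ 4 + 14 * u ^ 2 * v ^ 2 + v ^ 4 = w ^ 2) : False := by
  rcases Int.even_or_odd u with hEu | hOu
  · have hOv : Odd v := by
      rcases Int.even_or_odd v with hEv | hOv
      · exfalso; exact (Int.not_odd_iff_even.mpr (hEu.add hEv)) hpar
      · exact hOv
    exact T2aux huv hEu hOv hu0 hv0 hw
  · have hEv : Even v := by
      rcases Int.even_or_odd v with hEv | hOv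
      · exact hEv
      · exfalso; exact (Int.not_odd_iff_even.mpr (hOu.add_odd hOv)) hpar
    exact T2aux (w := w) huv.symm hEv hOu hv0 hu0 (by linear_combination hw)

private lemma Tmixed {x y z : ℤ} (hco : IsCoprime x y) (hx0 : x ≠ 0) (hy0 : y ≠ 0)
    (hExy : Even (x * y)) (h : x ^ 4 - x ^ 2 * y ^ 2 + y ^ 4 = z ^ 2) : False := by
  have ht : PythagoreanTriple (x ^ 2 - y ^ 2) (x * y) z := by
    show (x ^ 2 - y ^ 2) * (x ^ 2 - y ^ 2) + (x * y) * (x * y) = z * z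
    linear_combination h
  have hcoleg : IsCoprime (x ^ 2 - y ^ 2) (x * y) := by
    have c1 : IsCoprime (x ^ 2 - y ^ 2) x := by
      have : IsCoprime (-(y ^ 2) + x * x) x := ((hco.symm.pow_left).neg_left).add_mul_left_left x
      rwa [show -(y ^ 2) + x * x = x ^ 2 - y ^ 2 by ring] at this
    have c2 : IsCoprime (x ^ 2 - y ^ 2) y := by
      have : IsCoprime (x ^ 2 + y * (-y)) y := (hco.pow_left).symm.symm.add_mul_left_left (-y)
      rwa [show x ^ 2 + y * (-y) = x ^ 2 - y ^ 2 by ring] at this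
    exact c1.mul_right c2
  have hgcd : Int.gcd (x ^ 2 - y ^ 2) (x * y) = 1 := Int.isCoprime_iff_gcd_eq_one.mp hcoleg
  obtain ⟨m, n, hmn, hz, hco', hpar⟩ := PythagoreanTriple.coprime_classification.mp ⟨ht, hgcd⟩
  rcases hmn with ⟨hleg1, hleg2⟩ | ⟨hleg1, hleg2⟩
  · -- x^2-y^2 = m^2-n^2, xy = 2mn : the real case
    have hcomn : IsCoprime m n := Int.isCoprime_iff_gcd_eq_one.mpr hco'
    have hors : Odd (m + n) := by
      rcases hpar with ⟨he, ho⟩ | ⟨ho, he⟩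
      · exact (Int.even_iff.mpr he).add_odd (Int.odd_iff.mpr ho)
      · exact (Int.odd_iff.mpr ho).add_even (Int.even_iff.mpr he)
    have hm0 : m ≠ 0 := by
      rintro rfl
      simp only [mul_zero, zero_mul] at hleg2
      exact (mul_ne_zero hx0 hy0) (by linarith)
    have hn0 : n ≠ 0 := by
      rintro rfl
      simp only [mul_zero] at hleg2
      exact (mul_ne_zero hx0 hy0) (by linarith)
    exact T2 (w := x ^ 2 + y ^ 2) hcomn hors hm0 hn0
      (by linear_combination (-(x^2 - y^2 + m^2 - n^2))*hleg1 + (-(4*(x*y + 2*m*n)))*hleg2)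
  · -- x^2-y^2 = 2mn, xy = m^2-n^2 : impossible by parity
    have hOleg : Odd (m ^ 2 - n ^ 2) := by
      rcases hpar with ⟨he, ho⟩ | ⟨ho, he⟩
      · obtain ⟨a, ha⟩ := Int.even_iff.mpr he
        obtain ⟨b, hb⟩ := Int.odd_iff.mpr ho
        exact ⟨2*a^2 - 2*b^2 - 2*b - 1, by rw [ha, hb]; ring⟩
      · obtain ⟨b, hb⟩ := Int.odd_iff.mpr ho
        obtain ⟨a, ha⟩ := Int.even_iff.mpr he
        exact ⟨2*b^2 + 2*b - 2*a^2, by rw [ha, hb]; ring⟩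
    rw [← hleg2] at hOleg
    exact (Int.not_odd_iff_even.mpr hExy) hOleg

private lemma Tcop {x y z : ℤ} (hco : IsCoprime x y)
    (h : x ^ 4 - x ^ 2 * y ^ 2 + y ^ 4 = z ^ 2) : x = 0 ∨ y = 0 ∨ x ^ 2 = y ^ 2 := by
  by_cases hx0 : x = 0
  · exact Or.inl hx0
  by_cases hy0 : y = 0
  · exact Or.inr (Or.inl hy0)
  by_cases hxy : x ^ 2 = y ^ 2
  · exact Or.inr (Or.inr hxy)
  exfalso
  rcases Int.even_or_odd x with hEx | hOx <;> rcases Int.even_or_odd y with hEy | hOy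
  · -- both even: contradicts coprime
    obtain ⟨a, ha⟩ := hEx
    obtain ⟨b, hb⟩ := hEy
    have d1 : (2:ℤ) ∣ x := ⟨a, by omega⟩
    have d2 : (2:ℤ) ∣ y := ⟨b, by omega⟩
    exact absurd (hco.isUnit_of_dvd' d1 d2) (by norm_num [Int.isUnit_iff])
  · exact Tmixed hco hx0 hy0 (Int.even_mul.mpr (Or.inl hEx)) h
  · exact Tmixed hco hx0 hy0 (Int.even_mul.mpr (Or.inr hEy)) h
  · -- both odd
    have hExy2 : Even (x + y) := hOx.add_odd hOy
    have hExy3 : Even (x - y) := by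
      obtain ⟨a, ha⟩ := hOx
      obtain ⟨b, hb⟩ := hOy
      exact ⟨a - b, by omega⟩
    obtain ⟨U, hU⟩ := hExy2
    obtain ⟨V, hV⟩ := hExy3
    have hxUV : x = U + V := by omega
    have hyUV : y = U - V := by omega
    have hU0 : U ≠ 0 := by
      rintro rfl
      exact hxy (by rw [hxUV, hyUV]; ring)
    have hV0 : V ≠ 0 := by
      rintro rfl
      exact hxy (by rw [hxUV, hyUV]; ring)
    have hcoUV : IsCoprime U V := by
      obtain ⟨α, β, hαβ⟩ := hco
      exact ⟨α + β, α - β, by rw [hxUV, hyUV] at hαβ; linear_combination hαβ⟩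
    have hparUV : Odd (U + V) := by rw [← hxUV]; exact hOx
    exact T2 (w := z) hcoUV hparUV hU0 hV0
      (by rw [hxUV, hyUV] at h; linear_combination h)

private theorem thmT (x y z : ℤ) (h : x ^ 4 - x ^ 2 * y ^ 2 + y ^ 4 = z ^ 2) :
    x = 0 ∨ y = 0 ∨ x ^ 2 = y ^ 2 := by
  by_cases hx0 : x = 0
  · exact Or.inl hx0
  by_cases hy0 : y = 0
  · exact Or.inr (Or.inl hy0)
  have hgpos : 0 < Int.gcd x y := Int.gcd_pos_iff.mpr (Or.inl hx0)
  set g : ℤ := (Int.gcd x y : ℤ) with hgdef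
  have hgne : g ≠ 0 := by
    simp only [hgdef]
    exact_mod_cast hgpos.ne'
  obtain ⟨x₁, hx₁⟩ : g ∣ x := Int.gcd_dvd_left _ _
  obtain ⟨y₁, hy₁⟩ : g ∣ y := Int.gcd_dvd_right _ _
  have hco : IsCoprime x₁ y₁ := by
    have h1 := Int.gcd_div_gcd_div_gcd hgpos
    have e1 : x / g = x₁ := by rw [hx₁]; exact Int.mul_ediv_cancel_left _ hgne
    have e2 : y / g = y₁ := by rw [hy₁]; exact Int.mul_ediv_cancel_left _ hgne
    rw [Int.isCoprime_iff_gcd_eq_one, ← e1, ← e2]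
    exact h1
  have hgz : g ^ 2 ∣ z := by
    have : (g ^ 2) ^ 2 ∣ z ^ 2 := by
      refine ⟨x₁ ^ 4 - x₁ ^ 2 * y₁ ^ 2 + y₁ ^ 4, ?_⟩
      rw [hx₁, hy₁] at h
      linear_combination -h
    exact (Int.pow_dvd_pow_iff two_ne_zero).mp this
  obtain ⟨z₁, hz₁⟩ := hgz
  have h₁ : x₁ ^ 4 - x₁ ^ 2 * y₁ ^ 2 + y₁ ^ 4 = z₁ ^ 2 := by
    apply mul_left_cancel₀ (pow_ne_zero 4 hgne)
    rw [hx₁, hy₁, hz₁] at h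
    linear_combination h
  rcases Tcop hco h₁ with h' | h' | h'
  · exact Or.inl (by rw [hx₁, h', mul_zero])
  · exact Or.inr (Or.inl (by rw [hy₁, h', mul_zero]))
  · refine Or.inr (Or.inr ?_)
    rw [hx₁, hy₁]
    linear_combination g ^ 2 * h'

/-- There is no non-constant arithmetic progression of four integer squares. -/
theorem stmt_9 (a b c d : ℤ) (h1 : a ^ 2 + c ^ 2 = 2 * b ^ 2)
    (h2 : b ^ 2 + d ^ 2 = 2 * c ^ 2) :
    a ^ 2 = b ^ 2 ∧ b ^ 2 = c ^ 2 ∧ c ^ 2 = d ^ 2 := by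
  by_cases hbc : b ^ 2 = c ^ 2
  · exact ⟨by linarith, hbc, by linarith⟩
  exfalso
  -- p, q with p + q = c, p - q = a
  obtain ⟨p, hp⟩ : Even (a + c) := by
    rcases Int.even_or_odd a with hEa | hOa <;> rcases Int.even_or_odd c with hEc | hOc
    · exact hEa.add hEc
    · exfalso
      obtain ⟨x, hx⟩ := hEa
      obtain ⟨y, hy⟩ := hOc
      obtain ⟨z, hz⟩ : Even (2 * b ^ 2) := ⟨b ^ 2, by ring⟩
      rw [hx, hy] at h1
      obtain ⟨X, hX⟩ : ∃ X : ℤ, (x + x) ^ 2 + (2 * y + 1) ^ 2 = 2 * X + 1 :=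
        ⟨2 * x ^ 2 + 2 * y ^ 2 + 2 * y, by ring⟩
      omega
    · exfalso
      obtain ⟨x, hx⟩ := hOa
      obtain ⟨y, hy⟩ := hEc
      rw [hx, hy] at h1
      obtain ⟨X, hX⟩ : ∃ X : ℤ, (2 * x + 1) ^ 2 + (y + y) ^ 2 = 2 * X + 1 :=
        ⟨2 * x ^ 2 + 2 * x + 2 * y ^ 2, by ring⟩
      omega
    · obtain ⟨x, hx⟩ := hOa
      obtain ⟨y, hy⟩ := hOc
      exact ⟨x + y + 1, by omega⟩
  set q : ℤ := c - p with hqdef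
  have hc : p + q = c := by rw [hqdef]; ring
  have ha : p - q = a := by rw [hqdef]; omega
  obtain ⟨s, hs⟩ : Even (b + d) := by
    rcases Int.even_or_odd b with hEb | hOb <;> rcases Int.even_or_odd d with hEd | hOd
    · exact hEb.add hEd
    · exfalso
      obtain ⟨x, hx⟩ := hEb
      obtain ⟨y, hy⟩ := hOd
      rw [hx, hy] at h2
      obtain ⟨X, hX⟩ : ∃ X : ℤ, (x + x) ^ 2 + (2 * y + 1) ^ 2 = 2 * X + 1 :=
        ⟨2 * x ^ 2 + 2 * y ^ 2 + 2 * y, by ring⟩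
      omega
    · exfalso
      obtain ⟨x, hx⟩ := hOb
      obtain ⟨y, hy⟩ := hEd
      rw [hx, hy] at h2
      obtain ⟨X, hX⟩ : ∃ X : ℤ, (2 * x + 1) ^ 2 + (y + y) ^ 2 = 2 * X + 1 :=
        ⟨2 * x ^ 2 + 2 * x + 2 * y ^ 2, by ring⟩
      omega
    · obtain ⟨x, hx⟩ := hOb
      obtain ⟨y, hy⟩ := hOd
      exact ⟨x + y + 1, by omega⟩
  set t : ℤ := s - b with htdef
  have hd : s + t = d := by rw [htdef]; omega
  have hb : s - t = b := by rw [htdef]; ring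
  -- p*q = s*t
  have hprod : p * q = s * t := by
    apply mul_left_cancel₀ (show (4:ℤ) ≠ 0 by norm_num)
    have e1 : 4 * (p * q) = (p + q) ^ 2 - (p - q) ^ 2 := by ring
    have e2 : 4 * (s * t) = (s + t) ^ 2 - (s - t) ^ 2 := by ring
    rw [e1, e2, hc, ha, hd, hb]
    linarith
  have hpq0 : p * q ≠ 0 := by
    intro h0
    have e1 : 4 * (p * q) = (p + q) ^ 2 - (p - q) ^ 2 := by ring
    rw [hc, ha, h0] at e1
    apply hbc
    linarith
  have hp0 : p ≠ 0 := fun h => hpq0 (by rw [h, zero_mul])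
  obtain ⟨A, B, C, D, hpA, hqA, hsA, htA, -, -⟩ := four_num hp0 hprod
  have hA0 : A ≠ 0 := by rintro rfl; exact hpq0 (by rw [hpA]; ring)
  have hB0 : B ≠ 0 := by rintro rfl; exact hpq0 (by rw [hpA]; ring)
  have hC0 : C ≠ 0 := by rintro rfl; exact hpq0 (by rw [hqA]; ring)
  have hD0 : D ≠ 0 := by rintro rfl; exact hpq0 (by rw [hqA]; ring)
  -- key identities
  have hst : s ^ 2 + t ^ 2 = c ^ 2 := by
    apply mul_left_cancel₀ (two_ne_zero (α := ℤ))
    linear_combination h2 + (b + s - t) * hb + (d + s + t) * hd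
  have hst' : (A * C) ^ 2 + (B * D) ^ 2 = c ^ 2 := by rw [← hsA, ← htA]; exact hst
  have hc' : A * B + C * D = c := by rw [← hpA, ← hqA]; exact hc
  have hS : (A ^ 2 - D ^ 2) * (C ^ 2 - B ^ 2) = 2 * (A * B * C * D) := by
    linear_combination hst' - (A * B + C * D + c) * hc'
  -- produce a square equal to B^4 - B^2 C^2 + C^4
  set E : ℤ := (C ^ 2 - B ^ 2) * A - B * C * D with hEdef
  have hE : E ^ 2 = D ^ 2 * (B ^ 4 - B ^ 2 * C ^ 2 + C ^ 4) := by
    rw [hEdef]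
    linear_combination (C ^ 2 - B ^ 2) * hS
  have hDE : D ∣ E := by
    refine (Int.pow_dvd_pow_iff two_ne_zero).mp ⟨B ^ 4 - B ^ 2 * C ^ 2 + C ^ 4, hE⟩
  obtain ⟨F, hF⟩ := hDE
  have hM : B ^ 4 - B ^ 2 * C ^ 2 + C ^ 4 = F ^ 2 := by
    apply mul_left_cancel₀ (pow_ne_zero 2 hD0)
    rw [hF] at hE
    linear_combination -hE
  rcases thmT B C F hM with h' | h' | h'
  · exact hB0 h'
  · exact hC0 h'
  · -- B^2 = C^2 forces LHS of hS zero, so ABCD = 0, contradiction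
    have : 2 * (A * B * C * D) = 0 := by
      rw [← hS, h']
      ring
    have : A * B * C * D = 0 := by linarith
    rcases mul_eq_zero.mp this with h'' | h''
    · rcases mul_eq_zero.mp h'' with h3 | h3
      · rcases mul_eq_zero.mp h3 with h4 | h4
        · exact hA0 h4
        · exact hB0 h4
      · exact hC0 h3
    · exact hD0 h''
end

section
/- Over any field k of characteristic ≠ 2, 3, if there exists a point (x, y) ∈ k² with y² = x(x + 3)(x - 1) and x ∉ {0, 1, -1, -3, 3}, then there exists a non-constant arithmetic progression of four squares in k, i.e., elements a, b, c, d ∈ k with a² + c² = 2b², b² + d² = 2c², and not all of a², b², c², d² equal. -/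
/-- In a field of char ≠ 2,3, a point (x, y) with y² = x(x + 3)(x - 1) and
x ∉ {0, 1, -1, -3, 3} produces a non-constant arithmetic progression of four
squares. -/
theorem stmt_19 (k : Type*) [Field k] (h2 : (2 : k) ≠ 0) (h3 : (3 : k) ≠ 0)
    (x y : k) (hxy : y ^ 2 = x * (x + 3) * (x - 1))
    (hx : x ∉ ({0, 1, -1, -3, 3} : Set k)) :
    ∃ a b c d : k, a ^ 2 + c ^ 2 = 2 * b ^ 2 ∧ b ^ 2 + d ^ 2 = 2 * c ^ 2 ∧
      ¬(a ^ 2 = b ^ 2 ∧ b ^ 2 = c ^ 2 ∧ c ^ 2 = d ^ 2) := by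
  simp only [Set.mem_insert_iff, Set.mem_singleton_iff, not_or] at hx
  obtain ⟨hx0, hx1, hxm1, hxm3, hx3⟩ := hx
  have hxp3 : x + 3 ≠ 0 := fun h => hxm3 (by linear_combination h)
  have hxp1 : x + 1 ≠ 0 := fun h => hxm1 (by linear_combination h)
  have hxs1 : x - 1 ≠ 0 := sub_ne_zero.mpr hx1
  have hxs3 : x - 3 ≠ 0 := sub_ne_zero.mpr hx3
  have hy : y ≠ 0 := by
    intro h
    exact (mul_ne_zero (mul_ne_zero hx0 hxp3) hxs1) (by linear_combination -hxy + (y + 0) * h)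
  by_cases hd : ((((81) + (135)*x + (-243)*x^2 + (-93)*x^3 + (-93)*x^4 + (-43)*x^5 + (-1)*x^6 + (1)*x^7) + (1)*((54) + (90)*x + (204)*x^2 + (36)*x^3 + (-2)*x^4 + (2)*x^5)*y))^2 = ((((-81) + (27)*x + (-9)*x^2 + (219)*x^3 + (85)*x^4 + (9)*x^5 + (5)*x^6 + (1)*x^7) + (1)*((-144)*x + (-48)*x^2 + (-48)*x^3 + (-16)*x^4)*y))^2
  · refine ⟨(((81) + (135)*x + (-243)*x^2 + (-93)*x^3 + (-93)*x^4 + (-43)*x^5 + (-1)*x^6 + (1)*x^7) + (-1)*((54) + (90)*x + (204)*x^2 + (36)*x^3 + (-2)*x^4 + (2)*x^5)*y), (((-81) + (27)*x + (-9)*x^2 + (219)*x^3 + (85)*x^4 + (9)*x^5 + (5)*x^6 + (1)*x^7) + (-1)*((-144)*x + (-48)*x^2 + (-48)*x^3 + (-16)*x^4)*y), (((81) + (-81)*x + (117)*x^2 + (51)*x^3 + (51)*x^4 + (29)*x^5 + (7)*x^6 + (1)*x^7) + (-1)*((-54) + (54)*x + (-60)*x^2 + (-52)*x^3 + (-14)*x^4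 + (-2)*x^5)*y), (((81) + (-27)*x + (297)*x^2 + (69)*x^3 + (-117)*x^4 + (-41)*x^5 + (-5)*x^6 + (-1)*x^7) + (-1)*((-108) + (36)*x + (24)*x^2 + (24)*x^3 + (20)*x^4 + (4)*x^5)*y), by linear_combination ((5832) + (3888)*x + (-1944)*x^2 + (12096)*x^3 + (15120)*x^4 + (1056)*x^5 + (-2672)*x^6 + (-704)*x^7 + (40)*x^8 + (48)*x^9 + (8)*x^10) * hxy, by linear_combination ((5832) + (3888)*x + (-1944)*x^2 + (12096)*x^3 + (15120)*x^4 + (1056)*x^5 + (-2672)*x^6 + (-704)*x^7 + (40)*x^8 + (48)*x^9 + (8)*x^10) * hxy, ?_⟩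
    rintro ⟨e1, -, -⟩
    have hP : ((17496)*x + (-46656)*x^2 + (-50544)*x^3 + (-31104)*x^4 + (-18360)*x^5 + (70272)*x^6 + (52320)*x^7 + (8192)*x^8 + (-408)*x^9 + (-576)*x^10 + (-496)*x^11 + (-128)*x^12 + (-8)*x^13) = 0 := by
      have h4 : (2:k) * (((17496)*x + (-46656)*x^2 + (-50544)*x^3 + (-31104)*x^4 + (-18360)*x^5 + (70272)*x^6 + (52320)*x^7 + (8192)*x^8 + (-408)*x^9 + (-576)*x^10 + (-496)*x^11 + (-128)*x^12 + (-8)*x^13)) = 0 := by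
        linear_combination hd + e1 + (((-5832) + (-19440)*x + (-18792)*x^2 + (-53568)*x^3 + (-63504)*x^4 + (-10656)*x^5 + (6000)*x^6 + (1728)*x^7 + (216)*x^8 + (16)*x^9 + (-8)*x^10)) * hxy
      exact (mul_eq_zero.mp h4).resolve_left h2
    have hQ : ((8748) + (5832)*x + (31104)*x^2 + (-648)*x^3 + (-54324)*x^4 + (-31536)*x^5 + (-19488)*x^6 + (-7440)*x^7 + (1028)*x^8 + (1000)*x^9 + (160)*x^10 + (24)*x^11 + (4)*x^12) = 0 := by
      have h4 : (2:k) * y * (((8748) + (5832)*x + (31104)*x^2 + (-648)*x^3 + (-54324)*x^4 + (-31536)*x^5 + (-19488)*x^6 + (-7440)*x^7 + (1028)*x^8 + (1000)*x^9 + (160)*x^10 + (24)*x^11 + (4)*x^12)) = 0 := by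
        linear_combination hd - e1
      rcases mul_eq_zero.mp h4 with h5 | h5
      · exact absurd ((mul_eq_zero.mp h5).resolve_left h2) hy
      · exact h5
    have hkey : (13759414272 : k) * ((x - 3) * (x + 1) * (x + 3)^2) = 0 := by
      linear_combination ((-19119861) + (34535079)*x + (16539027)*x^2 + (15261495)*x^3 + (8153801)*x^4 + (1353293)*x^5 + (158297)*x^6 + (29845)*x^7) * hP + ((-42467328) + (9928170)*x + (-36103770)*x^2 + (32553474)*x^3 + (34497502)*x^4 + (10451390)*x^5 + (3604306)*x^6 + (913494)*x^7 + (59690)*x^8) * hQ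
    have hc : (13759414272 : k) ≠ 0 := by
      have : (13759414272 : k) = 2^21 * 3^8 := by norm_num
      rw [this]
      exact mul_ne_zero (pow_ne_zero _ h2) (pow_ne_zero _ h3)
    exact (mul_ne_zero hc (mul_ne_zero (mul_ne_zero hxs3 hxp1) (pow_ne_zero _ hxp3))) hkey
  · refine ⟨(((81) + (135)*x + (-243)*x^2 + (-93)*x^3 + (-93)*x^4 + (-43)*x^5 + (-1)*x^6 + (1)*x^7) + (1)*((54) + (90)*x + (204)*x^2 + (36)*x^3 + (-2)*x^4 + (2)*x^5)*y), (((-81) + (27)*x + (-9)*x^2 + (219)*x^3 + (85)*x^4 + (9)*x^5 + (5)*x^6 + (1)*x^7) + (1)*((-144)*x + (-48)*x^2 + (-48)*x^3 + (-16)*x^4)*y), (((81) + (-81)*x + (117)*x^2 + (51)*x^3 + (51)*x^4 + (29)*x^5 + (7)*x^6 + (1)*x^7) + (1)*((-54) + (54)*x + (-60)*x^2 + (-52)*x^3 + (-14)*x^4 + (-2)*x^5)*y), (((81) + (-27)*x + (297)*x^2 + (69)*x^3 + (-117)*x^4 + (-41)*x^5 + (-5)*x^6 + (-1)*x^7) +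 (1)*((-108) + (36)*x + (24)*x^2 + (24)*x^3 + (20)*x^4 + (4)*x^5)*y), by linear_combination ((5832) + (3888)*x + (-1944)*x^2 + (12096)*x^3 + (15120)*x^4 + (1056)*x^5 + (-2672)*x^6 + (-704)*x^7 + (40)*x^8 + (48)*x^9 + (8)*x^10) * hxy, by linear_combination ((5832) + (3888)*x + (-1944)*x^2 + (12096)*x^3 + (15120)*x^4 + (1056)*x^5 + (-2672)*x^6 + (-704)*x^7 + (40)*x^8 + (48)*x^9 + (8)*x^10) * hxy, ?_⟩
    rintro ⟨e1, -, -⟩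
    exact hd e1
end
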